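/- For every integer n ≥ 2, the polynomial P(λ) (as defined) satisfies P(−2) > 0, P(−1/n) < 0, P(−1/(2n−1)) > 0, and P(1) < 0; consequently P has three real roots in the interval (−2, 1). -/

import Mathlib

noncomputable def P (n x : ℝ) : ℝ :=
    (8*n^3 - 12*n^2 + 2*n + 1) * x^4
  + (-64*n^6 + 192*n^5 - 192*n^4 + 64*n^3 + 4*n^2 + 2*n - 4) * x^3
  + (-96*n^5 + 224*n^4 - 168*n^3 + 52*n^2 - 18*n + 6) * x^2
  + (32*n^5 - 112*n^4 + 128*n^3 - 68*n^2 + 22*n - 4) * x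
  + (16*n^4 - 32*n^3 + 24*n^2 - 8*n + 1)

lemma P_cont (n : ℝ) : Continuous (P n) := by
  unfold P; continuity

lemma root_of_signs (n a b : ℝ) (hab : a < b) (ha : 0 < P n a) (hb : P n b < 0) :
    ∃ r ∈ Set.Ioo a b, P n r = 0 := by
  obtain ⟨r, hr, hr0⟩ :=
    intermediate_value_Ioo' hab.le (P_cont n).continuousOn (Set.mem_Ioo.mpr ⟨hb, ha⟩)
  exact ⟨r, hr, hr0⟩

lemma root_of_signs' (n a b : ℝ) (hab : a < b) (ha : P n a < 0) (hb : 0 < P n b) :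
    ∃ r ∈ Set.Ioo a b, P n r = 0 := by
  obtain ⟨r, hr, hr0⟩ :=
    intermediate_value_Ioo hab.le (P_cont n).continuousOn (Set.mem_Ioo.mpr ⟨ha, hb⟩)
  exact ⟨r, hr, hr0⟩

theorem stmt_1 (n : ℕ) (hn : 2 ≤ n) :
    0 < P n (-2) ∧ P n (-1/(n:ℝ)) < 0 ∧ 0 < P n (-1/(2*(n:ℝ)-1)) ∧ P n 1 < 0 ∧
    ∃ r₁ r₂ r₃ : ℝ, r₁ < r₂ ∧ r₂ < r₃ ∧
      r₁ ∈ Set.Ioo (-2 : ℝ) 1 ∧ r₂ ∈ Set.Ioo (-2 : ℝ) 1 ∧ r₃ ∈ Set.Ioo (-2 : ℝ) 1 ∧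
      P n r₁ = 0 ∧ P n r₂ = 0 ∧ P n r₃ = 0 := by
  set x : ℝ := (n : ℝ) with hxdef
  have hx : (2:ℝ) ≤ x := by rw [hxdef]; exact_mod_cast hn
  have hx0 : (0:ℝ) < x := by linarith
  have hy0 : (0:ℝ) < 2*x - 1 := by linarith
  have hm : (0:ℝ) ≤ x - 2 := by linarith
  -- sign at -2
  have h1 : 0 < P x (-2) := by
    have key : P x (-2) = 512*(x-2)^6 + 4160*(x-2)^5 + 13552*(x-2)^4 + 22592*(x-2)^3
        + 20368*(x-2)^2 + 9428*(x-2) + 1721 := by unfold P; ring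
    rw [key]
    nlinarith [pow_nonneg hm 6, pow_nonneg hm 5, pow_nonneg hm 4, pow_nonneg hm 3,
      pow_nonneg hm 2]
  -- sign at 1
  have h4 : P x 1 < 0 := by
    have key : P x 1 = -64 * (x^4 * (x-1)^2) := by unfold P; ring
    rw [key]
    have : 0 < x^4 * (x-1)^2 := by
      apply mul_pos (pow_pos hx0 4)
      have : (0:ℝ) < x - 1 := by linarith
      positivity
    linarith
  -- sign at -1/x
  have h2 : P x (-1/x) < 0 := by
    have key : P x (-1/x) * x^4 = -(16*(x-2)^8 + 208*(x-2)^7 + 1192*(x-2)^6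
        + 3916*(x-2)^5 + 7993*(x-2)^4 + 10226*(x-2)^3 + 7836*(x-2)^2
        + 3186*(x-2) + 499) := by
      unfold P
      field_simp
      ring
    by_contra h
    push_neg at h
    have hpge : 0 ≤ P x (-1/x) * x^4 := mul_nonneg h (pow_pos hx0 4).le
    rw [key] at hpge
    nlinarith [pow_nonneg hm 8, pow_nonneg hm 7, pow_nonneg hm 6, pow_nonneg hm 5,
      pow_nonneg hm 4, pow_nonneg hm 3, pow_nonneg hm 2]
  -- sign at -1/(2x-1)
  have h3 : 0 < P x (-1/(2*x-1)) := by
    have key : P x (-1/(2*x-1)) * (2*x-1)^4 = 32 * (x^4 * ((x-1) * (2*x-1))) := by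
      unfold P
      have hyz : (2*x-1) * (2*x-1)⁻¹ = 1 := mul_inv_cancel₀ hy0.ne'
      rw [neg_div, one_div]
      linear_combination
        ((8*x^3 - 12*x^2 + 2*x + 1) * (1 + (2*x-1)*(2*x-1)⁻¹ + ((2*x-1)*(2*x-1)⁻¹)^2 + ((2*x-1)*(2*x-1)⁻¹)^3)
        - (-64*x^6 + 192*x^5 - 192*x^4 + 64*x^3 + 4*x^2 + 2*x - 4) * (2*x-1) * (1 + (2*x-1)*(2*x-1)⁻¹ + ((2*x-1)*(2*x-1)⁻¹)^2)
        + (-96*x^5 + 224*x^4 - 168*x^3 + 52*x^2 - 18*x + 6) * (2*x-1)^2 * (1 + (2*x-1)*(2*x-1)⁻¹)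
        - (32*x^5 - 112*x^4 + 128*x^3 - 68*x^2 + 22*x - 4) * (2*x-1)^3) * hyz
    by_contra h
    push_neg at h
    have hple : P x (-1/(2*x-1)) * (2*x-1)^4 ≤ 0 :=
      mul_nonpos_of_nonpos_of_nonneg h (pow_pos hy0 4).le
    rw [key] at hple
    have : 0 < x^4 * ((x-1) * (2*x-1)) := by
      apply mul_pos (pow_pos hx0 4)
      apply mul_pos <;> linarith
    linarith
  -- ordering of the four points
  have e1 : -1/x = -(1/x) := by ring
  have e2 : -1/(2*x-1) = -(1/(2*x-1)) := by ring
  have hi1 : 1/x ≤ 1/2 := one_div_le_one_div_of_le (by norm_num) hx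
  have hi2 : 1/(2*x-1) < 1/x := one_div_lt_one_div_of_lt hx0 (by linarith)
  have hi3 : (0:ℝ) < 1/(2*x-1) := by positivity
  have oA : (-2:ℝ) < -1/x := by rw [e1]; linarith
  have oB : -1/x < -1/(2*x-1) := by rw [e1, e2]; linarith
  have oC : -1/(2*x-1) < 1 := by rw [e2]; linarith
  refine ⟨h1, h2, h3, h4, ?_⟩
  obtain ⟨r₁, hr₁, hr₁0⟩ := root_of_signs x (-2) (-1/x) oA h1 h2
  obtain ⟨r₂, hr₂, hr₂0⟩ := root_of_signs' x (-1/x) (-1/(2*x-1)) oB h2 h3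
  obtain ⟨r₃, hr₃, hr₃0⟩ := root_of_signs x (-1/(2*x-1)) 1 oC h3 h4
  obtain ⟨ha1, hb1⟩ := hr₁
  obtain ⟨ha2, hb2⟩ := hr₂
  obtain ⟨ha3, hb3⟩ := hr₃
  exact ⟨r₁, r₂, r₃, by linarith, by linarith,
    ⟨ha1, by linarith⟩, ⟨by linarith, by linarith⟩, ⟨by linarith, hb3⟩, hr₁0, hr₂0, hr₃0⟩
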